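/- Let d ≥ 1 and let A be a finite subset of ℝ^2 not contained in any curve of degree at most d. Then the map τ_d ∘ σ_d^{-1} gives: the set of hyperplanes in ℝ^(binom(d+2,2)−1) associated (via the Veronese correspondence) to the curves of degree at most d determined by A equals the set of hyperplanes spanned by subsets of ψ_d(A). -/

import Mathlib

open scoped Classical

noncomputable section

/-- The zero set in `ℝ × ℝ` of a polynomial in two variables. -/
def zeroSet (p : MvPolynomial (Fin 2) ℝ) : Set (ℝ × ℝ) :=
  {x | MvPolynomial.eval ![x.1, x.2] p = 0}

/-- `C` is a curve of degree `e`: the zero set of a polynomial of total degree `e`. -/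
def IsCurve (e : ℕ) (C : Set (ℝ × ℝ)) : Prop :=
  ∃ p : MvPolynomial (Fin 2) ℝ, p.totalDegree = e ∧ C = zeroSet p

/-- `C` is a curve of degree at most `d` (and at least `1`). -/
def IsCurveLe (d : ℕ) (C : Set (ℝ × ℝ)) : Prop :=
  ∃ e, 1 ≤ e ∧ e ≤ d ∧ IsCurve e C

/-- Index set for the `d`-Veronese map: pairs `(n, m)` with `1 ≤ n + m ≤ d`.
It has `(d+2).choose 2 - 1` elements. -/
abbrev VIdx (d : ℕ) : Type :=
  {q : Fin (d + 1) × Fin (d + 1) // 1 ≤ (q.1 : ℕ) + (q.2 : ℕ) ∧ (q.1 : ℕ) + (q.2 : ℕ) ≤ d}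

/-- The `d`-Veronese map `ℝ² → ℝ^((d+2).choose 2 - 1)`. -/
def vero (d : ℕ) (a : ℝ × ℝ) : VIdx d → ℝ :=
  fun q => a.1 ^ (q.1.1 : ℕ) * a.2 ^ (q.1.2 : ℕ)

/-- Dimension of the affine hull of a set. -/
noncomputable def adim {α : Type*} (S : Set (α → ℝ)) : ℕ :=
  Module.finrank ℝ (affineSpan ℝ S).direction

/-- Dimension of an affine subspace. -/
noncomputable def fdim {α : Type*} (F : AffineSubspace ℝ (α → ℝ)) : ℕ :=
  Module.finrank ℝ F.direction

/-- The coefficient of the monomial `x^n y^m` in `p`, for `(n, m)` in the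
Veronese index set. -/
def coeffOf (d : ℕ) (p : MvPolynomial (Fin 2) ℝ) (q : VIdx d) : ℝ :=
  MvPolynomial.coeff (Finsupp.single 0 (q.1.1 : ℕ) + Finsupp.single 1 (q.1.2 : ℕ)) p

/-- The hyperplane in `ℝ^((d+2).choose 2 - 1)` associated to a polynomial of
degree between `1` and `d` via the Veronese correspondence. -/
def tau (d : ℕ) (p : MvPolynomial (Fin 2) ℝ) : Set (VIdx d → ℝ) :=
  {z | MvPolynomial.coeff 0 p + ∑ q : VIdx d, coeffOf d p q * z q = 0}

open Module MvPolynomial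

namespace S13

/-- The monomial exponent associated to a Veronese index. -/
def mIdx (d : ℕ) (q : VIdx d) : Fin 2 →₀ ℕ :=
  Finsupp.single 0 (q.1.1 : ℕ) + Finsupp.single 1 (q.1.2 : ℕ)

lemma mIdx_apply0 (d : ℕ) (q : VIdx d) : mIdx d q 0 = (q.1.1 : ℕ) := by
  simp [mIdx, Finsupp.single_apply]

lemma mIdx_apply1 (d : ℕ) (q : VIdx d) : mIdx d q 1 = (q.1.2 : ℕ) := by
  simp [mIdx, Finsupp.single_apply, Fin.ext_iff]

lemma degSum (m : Fin 2 →₀ ℕ) : (m.sum fun _ e => e) = m 0 + m 1 := by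
  rw [Finsupp.sum_fintype _ _ (fun _ => rfl), Fin.sum_univ_two]

lemma finsupp_eq_zero_iff (m : Fin 2 →₀ ℕ) : m = 0 ↔ m 0 = 0 ∧ m 1 = 0 := by
  constructor
  · rintro rfl; simp
  · rintro ⟨h0, h1⟩
    ext i
    fin_cases i <;> simpa

lemma mIdx_ne_zero (d : ℕ) (q : VIdx d) : mIdx d q ≠ 0 := by
  intro h
  rw [finsupp_eq_zero_iff] at h
  have h2 := q.2.1
  rw [mIdx_apply0, mIdx_apply1] at h
  omega
  
lemma mIdx_injective (d : ℕ) : Function.Injective (mIdx d) := by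
  intro q r h
  have h0 : mIdx d q 0 = mIdx d r 0 := by rw [h]
  have h1 : mIdx d q 1 = mIdx d r 1 := by rw [h]
  rw [mIdx_apply0, mIdx_apply0] at h0
  rw [mIdx_apply1, mIdx_apply1] at h1
  exact Subtype.ext (Prod.ext (Fin.ext h0) (Fin.ext h1))

lemma coeffOf_eq (d : ℕ) (p : MvPolynomial (Fin 2) ℝ) (q : VIdx d) :
    coeffOf d p q = coeff (mIdx d q) p := rfl

end S13

namespace S13
open Module MvPolynomial

/-- Coefficient vector of a polynomial. -/
def Phi (d : ℕ) (p : MvPolynomial (Fin 2) ℝ) : EuclideanSpace ℝ (Option (VIdx d)) :=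
  WithLp.toLp 2 (fun o => o.elim (coeff 0 p) (coeffOf d p))

/-- Polynomial with a given coefficient vector. -/
def Psi (d : ℕ) (v : Option (VIdx d) → ℝ) : MvPolynomial (Fin 2) ℝ :=
  C (v none) + ∑ q : VIdx d, monomial (mIdx d q) (v (some q))

lemma coeff_Psi (d : ℕ) (v : Option (VIdx d) → ℝ) (m : Fin 2 →₀ ℕ) :
    coeff m (Psi d v) =
      (if m = 0 then v none else 0) +
        ∑ q : VIdx d, if mIdx d q = m then v (some q) else 0 := by
  rw [Psi, coeff_add, coeff_sum]
  congr 1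
  · rw [coeff_C]
    by_cases h : m = 0 <;> simp [h, eq_comm]
  · exact Finset.sum_congr rfl fun q _ => coeff_monomial _ _ _

lemma coeff_zero_Psi (d : ℕ) (v : Option (VIdx d) → ℝ) : coeff 0 (Psi d v) = v none := by
  rw [coeff_Psi]
  rw [if_pos rfl, Finset.sum_eq_zero, add_zero]
  intro q _
  exact if_neg (mIdx_ne_zero d q)

lemma coeffOf_Psi (d : ℕ) (v : Option (VIdx d) → ℝ) (q : VIdx d) :
    coeffOf d (Psi d v) q = v (some q) := by
  rw [coeffOf_eq, coeff_Psi]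
  rw [if_neg (mIdx_ne_zero d q), zero_add]
  rw [Finset.sum_eq_single q (fun r _ hr => if_neg (fun h => hr (mIdx_injective d h)))
    (fun h => absurd (Finset.mem_univ q) h)]
  exact if_pos rfl

lemma Phi_Psi (d : ℕ) (v : EuclideanSpace ℝ (Option (VIdx d))) : Phi d (Psi d v) = v := by
  ext o
  cases o with
  | none => exact coeff_zero_Psi d v
  | some q => exact coeffOf_Psi d v q

lemma totalDegree_Psi_le (d : ℕ) (v : Option (VIdx d) → ℝ) : (Psi d v).totalDegree ≤ d := by
  refine le_trans (totalDegree_add _ _) (max_le ?_ ?_)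
  · exact le_trans (totalDegree_C _).le (Nat.zero_le d)
  · refine le_trans (totalDegree_finset_sum _ _) (Finset.sup_le fun q _ => ?_)
    refine le_trans (totalDegree_monomial_le _ _) ?_
    have : ((mIdx d q).sum fun _ e => e) = mIdx d q 0 + mIdx d q 1 := degSum _
    simp only [Finsupp.sum, id_eq] at this ⊢
    rw [this, mIdx_apply0, mIdx_apply1]
    exact q.2.2

/-- Decomposition: a polynomial of degree at most `d` is recovered from its coefficients. -/
lemma Psi_Phi (d : ℕ) (p : MvPolynomial (Fin 2) ℝ) (hp : p.totalDegree ≤ d) :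
    Psi d (Phi d p) = p := by
  apply MvPolynomial.ext
  intro m
  rw [coeff_Psi]
  by_cases hm : m = 0
  · subst hm
    rw [if_pos rfl, Finset.sum_eq_zero (fun q _ => if_neg (mIdx_ne_zero d q)), add_zero]
    rfl
  · rw [if_neg hm, zero_add]
    by_cases hdeg : m 0 + m 1 ≤ d
    · -- there is exactly one matching index
      have hm0 : m 0 < d + 1 := by omega
      have hm1 : m 1 < d + 1 := by omega
      have hpos : 1 ≤ m 0 + m 1 := by
        rcases Nat.eq_zero_or_pos (m 0 + m 1) with h | h
        · exfalso; exact hm ((finsupp_eq_zero_iff m).2 ⟨by omega, by omega⟩)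
        · omega
      set q₀ : VIdx d := ⟨(⟨m 0, hm0⟩, ⟨m 1, hm1⟩), ⟨hpos, hdeg⟩⟩ with hq₀
      have hmq : mIdx d q₀ = m := by
        have e0 : mIdx d q₀ 0 = m 0 := mIdx_apply0 d q₀
        have e1 : mIdx d q₀ 1 = m 1 := mIdx_apply1 d q₀
        ext i
        match i with
        | 0 => exact e0
        | 1 => exact e1
      rw [Finset.sum_eq_single q₀ (fun r _ hr => if_neg (fun h => hr ?_))
        (fun h => absurd (Finset.mem_univ q₀) h)]
      · rw [if_pos hmq]
        show coeffOf d p q₀ = coeff m p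
        rw [coeffOf_eq, hmq]
      · exact mIdx_injective d (h.trans hmq.symm)
    · -- coefficient is zero on both sides
      rw [Finset.sum_eq_zero, eq_comm]
      · by_contra hc
        have hsupp : m ∈ p.support := mem_support_iff.2 hc
        have := MvPolynomial.le_totalDegree hsupp
        rw [degSum] at this
        omega
      · intro q _
        refine if_neg fun h => hdeg ?_
        have h0 : mIdx d q 0 = m 0 := by rw [h]
        have h1 : mIdx d q 1 = m 1 := by rw [h]
        rw [mIdx_apply0] at h0; rw [mIdx_apply1] at h1
        rw [← h0, ← h1]
        exact q.2.2

end S13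

namespace S13
open Module MvPolynomial

/-- Affine evaluation of a coefficient vector on a point of `ℝ^(VIdx d)`. -/
def evE (d : ℕ) (v : Option (VIdx d) → ℝ) (z : VIdx d → ℝ) : ℝ :=
  v none + ∑ q : VIdx d, v (some q) * z q

lemma tau_eq (d : ℕ) (p : MvPolynomial (Fin 2) ℝ) :
    tau d p = {z | evE d (Phi d p) z = 0} := rfl

lemma eval_Psi (d : ℕ) (v : Option (VIdx d) → ℝ) (a : ℝ × ℝ) :
    MvPolynomial.eval ![a.1, a.2] (Psi d v) = evE d v (vero d a) := by
  rw [Psi, evE]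
  rw [map_add, map_sum, eval_C]
  congr 1
  refine Finset.sum_congr rfl fun q _ => ?_
  rw [eval_monomial]
  congr 1
  rw [Finsupp.prod_fintype _ _ (fun i => pow_zero _), Fin.prod_univ_two]
  rw [mIdx_apply0, mIdx_apply1]
  rfl

lemma eval_eq_evE (d : ℕ) (p : MvPolynomial (Fin 2) ℝ) (hp : p.totalDegree ≤ d) (a : ℝ × ℝ) :
    MvPolynomial.eval ![a.1, a.2] p = evE d (Phi d p) (vero d a) := by
  conv_lhs => rw [← Psi_Phi d p hp]
  exact eval_Psi d (Phi d p) a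

lemma mem_zeroSet_iff (d : ℕ) (p : MvPolynomial (Fin 2) ℝ) (hp : p.totalDegree ≤ d) (a : ℝ × ℝ) :
    a ∈ zeroSet p ↔ evE d (Phi d p) (vero d a) = 0 := by
  rw [zeroSet, Set.mem_setOf_eq, eval_eq_evE d p hp]

lemma Phi_add (d : ℕ) (p q : MvPolynomial (Fin 2) ℝ) : Phi d (p + q) = Phi d p + Phi d q := by
  ext o
  cases o with
  | none => show coeff 0 (p + q) = coeff 0 p + coeff 0 q; rw [coeff_add]
  | some r => show coeffOf d (p + q) r = coeffOf d p r + coeffOf d q r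
              simp only [coeffOf_eq, coeff_add]

lemma Phi_smul (d : ℕ) (t : ℝ) (p : MvPolynomial (Fin 2) ℝ) : Phi d (t • p) = t • Phi d p := by
  ext o
  cases o with
  | none => show coeff 0 (t • p) = t * coeff 0 p; rw [coeff_smul]; rfl
  | some r => show coeffOf d (t • p) r = t * coeffOf d p r
              simp only [coeffOf_eq, coeff_smul]; rfl

lemma Phi_zero (d : ℕ) : Phi d 0 = 0 := by
  ext o
  cases o with
  | none => show coeff 0 (0 : MvPolynomial (Fin 2) ℝ) = 0; simp
  | some r => show coeffOf d 0 r = 0; simp [coeffOf_eq]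

lemma Phi_injOn (d : ℕ) {p q : MvPolynomial (Fin 2) ℝ} (hp : p.totalDegree ≤ d)
    (hq : q.totalDegree ≤ d) (h : Phi d p = Phi d q) : p = q := by
  rw [← Psi_Phi d p hp, ← Psi_Phi d q hq, h]

lemma Phi_ne_zero (d : ℕ) {p : MvPolynomial (Fin 2) ℝ} (hp : p.totalDegree ≤ d) (h : p ≠ 0) :
    Phi d p ≠ 0 := by
  intro hz
  exact h (Phi_injOn d hp (by simp [totalDegree_zero]) (by rw [hz, Phi_zero]))

/-- If some Veronese coefficient is nonzero then the total degree is at least 1. -/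
lemma one_le_totalDegree (d : ℕ) {p : MvPolynomial (Fin 2) ℝ} {q : VIdx d}
    (h : coeffOf d p q ≠ 0) : (q.1.1 : ℕ) + (q.1.2 : ℕ) ≤ p.totalDegree := by
  rw [coeffOf_eq] at h
  have hs : mIdx d q ∈ p.support := mem_support_iff.2 h
  have := MvPolynomial.le_totalDegree hs
  rw [degSum, mIdx_apply0, mIdx_apply1] at this
  exact this

lemma exists_coeffOf_ne_zero (d : ℕ) {p : MvPolynomial (Fin 2) ℝ}
    (h1 : 1 ≤ p.totalDegree) (h2 : p.totalDegree ≤ d) : ∃ q : VIdx d, coeffOf d p q ≠ 0 := by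
  by_contra hc
  push_neg at hc
  -- then p = C (coeff 0 p), degree 0
  have hp : p = Psi d (Phi d p) := (Psi_Phi d p h2).symm
  have hz : ∑ q : VIdx d, (monomial (mIdx d q)) (Phi d p (some q)) = 0 :=
    Finset.sum_eq_zero fun q _ => by
      rw [show Phi d p (some q) = 0 from hc q, map_zero]
  have hpc : p = C (Phi d p none) := by
    conv_lhs => rw [hp]
    rw [Psi, hz, add_zero]
  rw [hpc, totalDegree_C] at h1
  omega

end S13

namespace S13
open Module MvPolynomial

/-- Linear part of `evE`. -/
def linPart (d : ℕ) (v : Option (VIdx d) → ℝ) : (VIdx d → ℝ) →ₗ[ℝ] ℝ where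
  toFun z := ∑ q : VIdx d, v (some q) * z q
  map_add' x y := by
    simp only [Pi.add_apply, mul_add]
    rw [Finset.sum_add_distrib]
  map_smul' t x := by
    simp only [Pi.smul_apply, smul_eq_mul, RingHom.id_apply]
    rw [Finset.mul_sum]
    exact Finset.sum_congr rfl fun q _ => by ring

lemma evE_eq (d : ℕ) (v : Option (VIdx d) → ℝ) (z : VIdx d → ℝ) :
    evE d v z = v none + linPart d v z := rfl

/-- The solution set of `evE v = 0` as an affine subspace. -/
def T (d : ℕ) (v : Option (VIdx d) → ℝ) : AffineSubspace ℝ (VIdx d → ℝ) where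
  carrier := {z | evE d v z = 0}
  smul_vsub_vadd_mem' t {a b c} ha hb hc := by
    simp only [Set.mem_setOf_eq, evE_eq] at *
    have h2 : linPart d v (t • (a -ᵥ b) +ᵥ c) =
        t • (linPart d v a - linPart d v b) + linPart d v c := by
      have h1 : (t • (a -ᵥ b) +ᵥ c) = t • (a - b) + c := rfl
      rw [h1, map_add, map_smul, map_sub]
    have h3 : linPart d v a - linPart d v b = 0 := by linarith
    rw [h2, h3, smul_zero, zero_add]
    linarith

lemma mem_T_iff (d : ℕ) (v : Option (VIdx d) → ℝ) (z : VIdx d → ℝ) :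
    z ∈ T d v ↔ evE d v z = 0 := Iff.rfl

lemma coe_T (d : ℕ) (v : Option (VIdx d) → ℝ) : (T d v : Set (VIdx d → ℝ)) = {z | evE d v z = 0} := rfl

lemma linPart_single (d : ℕ) (v : Option (VIdx d) → ℝ) (q₀ : VIdx d) (c : ℝ) :
    linPart d v (Pi.single q₀ c) = v (some q₀) * c := by
  rw [show linPart d v (Pi.single q₀ c) =
      ∑ q : VIdx d, v (some q) * (Pi.single q₀ c : VIdx d → ℝ) q from rfl]
  rw [Finset.sum_eq_single q₀]
  · rw [Pi.single_eq_same]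
  · intro r _ hr
    rw [Pi.single_eq_of_ne hr, mul_zero]
  · intro h; exact absurd (Finset.mem_univ q₀) h

lemma T_nonempty (d : ℕ) (v : Option (VIdx d) → ℝ) {q₀ : VIdx d} (h : v (some q₀) ≠ 0) :
    ((T d v : Set (VIdx d → ℝ))).Nonempty := by
  refine ⟨Pi.single q₀ (-(v none) / v (some q₀)), ?_⟩
  show evE d v _ = 0
  rw [evE_eq, linPart_single]
  field_simp
  ring

lemma direction_T (d : ℕ) (v : Option (VIdx d) → ℝ) (hne : ((T d v : Set (VIdx d → ℝ))).Nonempty) :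
    (T d v).direction = LinearMap.ker (linPart d v) := by
  obtain ⟨z₀, hz₀⟩ := hne
  have hz₀' : z₀ ∈ T d v := hz₀
  apply le_antisymm
  · rw [AffineSubspace.direction_eq_vectorSpan, vectorSpan_def]
    rw [Submodule.span_le]
    rintro w ⟨a, ha, b, hb, rfl⟩
    have ha' : evE d v a = 0 := ha
    have hb' : evE d v b = 0 := hb
    rw [evE_eq] at ha' hb'
    show a - b ∈ LinearMap.ker (linPart d v)
    rw [LinearMap.mem_ker, map_sub]
    linarith
  · intro w hw
    rw [LinearMap.mem_ker] at hw
    have hmem : w + z₀ ∈ T d v := by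
      rw [mem_T_iff, evE_eq, map_add, hw, zero_add, ← evE_eq]
      exact hz₀'
    have := AffineSubspace.vsub_mem_direction hmem hz₀'
    simpa using this

lemma linPart_ne_zero (d : ℕ) (v : Option (VIdx d) → ℝ) {q₀ : VIdx d} (h : v (some q₀) ≠ 0) :
    linPart d v ≠ 0 := by
  intro hz
  have := DFunLike.congr_fun hz (Pi.single q₀ 1)
  rw [linPart_single, mul_one, LinearMap.zero_apply] at this
  exact h this

lemma finrank_ker_linPart (d : ℕ) (v : Option (VIdx d) → ℝ) {q₀ : VIdx d} (h : v (some q₀) ≠ 0) :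
    finrank ℝ (LinearMap.ker (linPart d v)) = Fintype.card (VIdx d) - 1 := by
  have hr : LinearMap.range (linPart d v) = ⊤ := by
    rcases eq_bot_or_eq_top (LinearMap.range (linPart d v)) with hb | ht
    · exfalso
      apply linPart_ne_zero d v h
      apply LinearMap.ext
      intro z
      have : linPart d v z ∈ LinearMap.range (linPart d v) := LinearMap.mem_range_self _ z
      rw [hb, Submodule.mem_bot] at this
      simpa using this
    · exact ht
  have := LinearMap.finrank_range_add_finrank_ker (linPart d v)
  rw [hr, finrank_top, finrank_self, Module.finrank_pi] at this
  omega

end S13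

namespace S13
open Module MvPolynomial

/-- Embedding `z ↦ (1, z)` into the coefficient pairing space. -/
def iota (d : ℕ) (z : VIdx d → ℝ) : EuclideanSpace ℝ (Option (VIdx d)) :=
  WithLp.toLp 2 (fun o => o.elim 1 z)

/-- Linear embedding `w ↦ (0, w)`. -/
def jmap (d : ℕ) : (VIdx d → ℝ) →ₗ[ℝ] EuclideanSpace ℝ (Option (VIdx d)) where
  toFun w := WithLp.toLp 2 (fun o => o.elim 0 w)
  map_add' x y := by
    ext o
    cases o with
    | none => show (0:ℝ) = 0 + 0; ring
    | some q => rfl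
  map_smul' t x := by
    ext o
    cases o with
    | none => show (0:ℝ) = t * 0; ring
    | some q => rfl

lemma jmap_injective (d : ℕ) : Function.Injective (jmap d) := by
  intro x y h
  funext q
  exact congrArg (fun u => u.ofLp (some q)) h

lemma inner_iota (d : ℕ) (z : VIdx d → ℝ) (v : EuclideanSpace ℝ (Option (VIdx d))) :
    (inner ℝ (iota d z) v : ℝ) = evE d v z := by
  rw [PiLp.inner_apply]
  simp only [RCLike.inner_apply', starRingEnd_apply, star_trivial]
  rw [Fintype.sum_option]
  rw [evE]
  show (1:ℝ) * v none + _ = _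
  rw [one_mul]
  congr 1
  exact Finset.sum_congr rfl fun q _ => mul_comm _ _

/-- Membership in the orthogonal complement of the span of `iota '' S`. -/
lemma mem_orth_iff (d : ℕ) (S : Set (VIdx d → ℝ)) (v : EuclideanSpace ℝ (Option (VIdx d))) :
    v ∈ (Submodule.span ℝ (iota d '' S))ᗮ ↔ ∀ z ∈ S, evE d v z = 0 := by
  rw [Submodule.mem_orthogonal]
  constructor
  · intro h z hz
    rw [← inner_iota]
    exact h _ (Submodule.subset_span ⟨z, hz, rfl⟩)
  · intro h u hu
    induction hu using Submodule.span_induction with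
    | mem u hu' => obtain ⟨z, hz, rfl⟩ := hu'; rw [inner_iota]; exact h z hz
    | zero => rw [inner_zero_left]
    | add a b _ _ ha hb => rw [inner_add_left, ha, hb, add_zero]
    | smul t a _ ha => rw [inner_smul_left, ha, mul_zero]

lemma span_iota_eq (d : ℕ) (S : Set (VIdx d → ℝ)) {z₀ : VIdx d → ℝ} (hz₀ : z₀ ∈ S) :
    Submodule.span ℝ (iota d '' S)
      = (ℝ ∙ iota d z₀) ⊔ Submodule.map (jmap d) (vectorSpan ℝ S) := by
  apply le_antisymm
  · rw [Submodule.span_le]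
    rintro _ ⟨z, hz, rfl⟩
    have hdecomp : iota d z = iota d z₀ + jmap d (z - z₀) := by
      ext o
      cases o with
      | none => show (1:ℝ) = 1 + 0; ring
      | some q => show z q = z₀ q + (z q - z₀ q); ring
    rw [hdecomp]
    apply Submodule.add_mem_sup
    · exact Submodule.mem_span_singleton_self _
    · exact Submodule.mem_map_of_mem (vsub_mem_vectorSpan ℝ hz hz₀)
  · apply sup_le
    · rw [Submodule.span_singleton_le_iff_mem]
      exact Submodule.subset_span ⟨z₀, hz₀, rfl⟩
    · rw [vectorSpan_def, Submodule.map_span, Submodule.span_le]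
      rintro _ ⟨_, ⟨a, ha, b, hb, rfl⟩, rfl⟩
      have : jmap d (a -ᵥ b) = iota d a - iota d b := by
        ext o
        cases o with
        | none => show (0:ℝ) = 1 - 1; ring
        | some q => rfl
      rw [this]
      exact Submodule.sub_mem _ (Submodule.subset_span ⟨a, ha, rfl⟩)
        (Submodule.subset_span ⟨b, hb, rfl⟩)

lemma finrank_span_iota (d : ℕ) (S : Set (VIdx d → ℝ)) (hS : S.Nonempty) :
    finrank ℝ (Submodule.span ℝ (iota d '' S))
      = finrank ℝ (vectorSpan ℝ S) + 1 := by
  obtain ⟨z₀, hz₀⟩ := hS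
  rw [span_iota_eq d S hz₀]
  have hdisj : (ℝ ∙ iota d z₀) ⊓ Submodule.map (jmap d) (vectorSpan ℝ S) = ⊥ := by
    rw [eq_bot_iff]
    rintro u ⟨hu1, hu2⟩
    obtain ⟨t, rfl⟩ := Submodule.mem_span_singleton.1 hu1
    obtain ⟨w, _, hw⟩ := hu2
    have h0 : (t • iota d z₀) none = t := by
      show t * 1 = t; ring
    have h1 : (jmap d w) none = 0 := rfl
    have ht : t = 0 := by rw [← h0, ← hw, h1]
    rw [Submodule.mem_bot, ht, zero_smul]
  have hone : finrank ℝ (ℝ ∙ iota d z₀) = 1 := by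
    apply finrank_span_singleton
    intro h
    have := congrArg (fun u => u.ofLp none) h
    simp only [Pi.zero_apply] at this
    exact one_ne_zero this
  have hmap : finrank ℝ (Submodule.map (jmap d) (vectorSpan ℝ S)) = finrank ℝ (vectorSpan ℝ S) :=
    (LinearEquiv.finrank_eq (Submodule.equivMapOfInjective _ (jmap_injective d) _)).symm
  have := Submodule.finrank_sup_add_finrank_inf_eq (ℝ ∙ iota d z₀)
    (Submodule.map (jmap d) (vectorSpan ℝ S))
  rw [hdisj, finrank_bot, hone, hmap] at this
  omega

end S13

namespace S13
open Module

lemma card_VIdx (d : ℕ) : Fintype.card (VIdx d) = (d + 2).choose 2 - 1 := by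
  classical
  rw [Fintype.card_subtype]
  rw [Finset.card_filter]
  rw [Fintype.sum_prod_type]
  have hsum : ∀ n : Fin (d + 1),
      (∑ m : Fin (d + 1), if 1 ≤ (n : ℕ) + (m : ℕ) ∧ (n : ℕ) + (m : ℕ) ≤ d then 1 else 0)
        = (d + 1 - (n : ℕ)) - (if (n : ℕ) = 0 then 1 else 0) := by
    intro n
    rw [Fin.sum_univ_eq_sum_range (fun i => if 1 ≤ (n : ℕ) + i ∧ (n : ℕ) + i ≤ d then 1 else 0)]
    rw [← Finset.card_filter]
    by_cases hn : (n : ℕ) = 0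
    · have : (Finset.range (d + 1)).filter (fun i => 1 ≤ (n : ℕ) + i ∧ (n : ℕ) + i ≤ d)
          = Finset.Ico 1 (d + 1) := by
        ext i
        simp only [Finset.mem_filter, Finset.mem_range, Finset.mem_Ico]
        omega
      rw [this, Nat.card_Ico, if_pos hn]
      omega
    · have hn' : 1 ≤ (n : ℕ) := by omega
      have hnd : (n : ℕ) ≤ d := by
        have := n.2; omega
      have : (Finset.range (d + 1)).filter (fun i => 1 ≤ (n : ℕ) + i ∧ (n : ℕ) + i ≤ d)
          = Finset.range (d + 1 - (n : ℕ)) := by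
        ext i
        simp only [Finset.mem_filter, Finset.mem_range]
        omega
      rw [this, Finset.card_range, if_neg hn]
      omega
  calc (∑ n : Fin (d + 1), ∑ m : Fin (d + 1),
        if 1 ≤ (n : ℕ) + (m : ℕ) ∧ (n : ℕ) + (m : ℕ) ≤ d then 1 else 0)
      = ∑ n : Fin (d + 1), ((d + 1 - (n : ℕ)) - (if (n : ℕ) = 0 then 1 else 0)) :=
        Finset.sum_congr rfl fun n _ => hsum n
    _ = ∑ i ∈ Finset.range (d + 1), ((d + 1 - i) - (if i = 0 then 1 else 0)) :=
        Fin.sum_univ_eq_sum_range (fun i => (d + 1 - i) - (if i = 0 then 1 else 0)) (d + 1)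
    _ = (d + 2).choose 2 - 1 := by
        have key : ∀ N : ℕ, (∑ i ∈ Finset.range N, (N - i)) = N * (N + 1) / 2 := by
          intro N
          have h1 : (∑ i ∈ Finset.range N, (N - i)) = ∑ i ∈ Finset.range N, (i + 1) := by
            rw [← Finset.sum_range_reflect (fun i => i + 1) N]
            refine Finset.sum_congr rfl fun i hi => ?_
            rw [Finset.mem_range] at hi
            omega
          have h2 := Finset.sum_range_id_mul_two N
          have hm : N * (N + 1) = N * (N - 1) + 2 * N := by
            rcases N with _ | M
            · simp
            · have : M + 1 - 1 = M := rfl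
              rw [this]; ring
          rw [h1, Finset.sum_add_distrib, Finset.sum_const, Finset.card_range, smul_eq_mul]
          omega
        have h3 : ∀ i ∈ Finset.range (d + 1),
            (d + 1 - i) - (if i = 0 then 1 else 0)
              = (d + 1 - i) - (if i = 0 then 1 else 0) := fun _ _ => rfl
        -- split the ite sum:  Σ (a_i - b_i) where b_i ≤ a_i
        have h4 : (∑ i ∈ Finset.range (d + 1), ((d + 1 - i) - (if i = 0 then 1 else 0)))
            + (∑ i ∈ Finset.range (d + 1), (if i = 0 then 1 else 0))
            = ∑ i ∈ Finset.range (d + 1), (d + 1 - i) := by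
          rw [← Finset.sum_add_distrib]
          refine Finset.sum_congr rfl fun i hi => ?_
          rw [Finset.mem_range] at hi
          by_cases h : i = 0 <;> simp [h] <;> omega
        have h5 : (∑ i ∈ Finset.range (d + 1), (if i = 0 then 1 else 0)) = 1 := by
          rw [Finset.sum_ite_eq' (Finset.range (d + 1)) 0 (fun _ => 1)]
          simp
        have h6 := key (d + 1)
        rw [Nat.choose_two_right]
        have hc : (d + 2) * (d + 2 - 1) = (d + 1) * (d + 1 + 1) := by
          rw [show d + 2 - 1 = d + 1 from rfl]; ring
        obtain ⟨k, hk⟩ := Nat.even_mul_succ_self (d + 1)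
        omega
  
end S13

namespace S13
open Module MvPolynomial

lemma card_ge (d : ℕ) (hd : 1 ≤ d) : 2 ≤ Fintype.card (VIdx d) := by
  have h3 : 3 ≤ (d + 2).choose 2 := by
    have := Nat.choose_le_choose 2 (show 3 ≤ d + 2 by omega)
    simpa using this
  rw [card_VIdx]
  omega

/-- The hyperplane-identification lemma: an affine span of maximal dimension
inside the solution set of `evE v = 0` equals that solution set. -/
lemma coe_affineSpan_eq (d : ℕ) (v : Option (VIdx d) → ℝ) {q₀ : VIdx d}
    (hq : v (some q₀) ≠ 0) (S : Set (VIdx d → ℝ)) (hS : S.Nonempty)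
    (hsub : S ⊆ {z | evE d v z = 0})
    (hdim : finrank ℝ (vectorSpan ℝ S) = Fintype.card (VIdx d) - 1) :
    ((affineSpan ℝ S : AffineSubspace ℝ (VIdx d → ℝ)) : Set (VIdx d → ℝ))
      = {z | evE d v z = 0} := by
  have hle : affineSpan ℝ S ≤ T d v := affineSpan_le.2 hsub
  have hTne : ((T d v : Set (VIdx d → ℝ))).Nonempty := T_nonempty d v hq
  have hdir : (affineSpan ℝ S).direction = (T d v).direction := by
    apply Submodule.eq_of_le_of_finrank_eq (AffineSubspace.direction_le hle)
    rw [direction_T d v hTne, direction_affineSpan, finrank_ker_linPart d v hq, hdim]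
  obtain ⟨z₀, hz₀⟩ := hS
  have heq : affineSpan ℝ S = T d v :=
    AffineSubspace.ext_of_direction_eq hdir
      ⟨z₀, subset_affineSpan ℝ S hz₀, hsub hz₀⟩
  rw [heq, coe_T]

/-- Extract a top-degree Veronese index from a polynomial of total degree exactly `d`. -/
lemma exists_top_index (d : ℕ) (hd : 1 ≤ d) {g : MvPolynomial (Fin 2) ℝ}
    (hg : g.totalDegree = d) :
    ∃ q : VIdx d, (q.1.1 : ℕ) + (q.1.2 : ℕ) = d ∧ coeffOf d g q ≠ 0 := by
  have hg0 : g ≠ 0 := by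
    intro h0; rw [h0, totalDegree_zero] at hg; omega
  have hsupp : g.support.Nonempty := by
    rw [Finset.nonempty_iff_ne_empty]
    intro h
    exact hg0 (support_eq_empty.1 h)
  obtain ⟨m, hm, hsup⟩ := Finset.exists_mem_eq_sup g.support hsupp
    (fun m => m.sum fun _ e => e)
  have hmsum : m 0 + m 1 = d := by
    rw [← degSum]
    rw [← hsup]
    exact hg.symm ▸ rfl
  have hm0 : m 0 < d + 1 := by omega
  have hm1 : m 1 < d + 1 := by omega
  have hprop : 1 ≤ m 0 + m 1 ∧ m 0 + m 1 ≤ d := ⟨by omega, by omega⟩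
  refine ⟨⟨(⟨m 0, hm0⟩, ⟨m 1, hm1⟩), hprop⟩, hmsum, ?_⟩
  have hmq : mIdx d ⟨(⟨m 0, hm0⟩, ⟨m 1, hm1⟩), hprop⟩ = m := by
    have e0 := mIdx_apply0 d ⟨(⟨m 0, hm0⟩, ⟨m 1, hm1⟩), hprop⟩
    have e1 := mIdx_apply1 d ⟨(⟨m 0, hm0⟩, ⟨m 1, hm1⟩), hprop⟩
    ext i
    match i with
    | 0 => exact e0
    | 1 => exact e1
  rw [coeffOf_eq, hmq]
  exact mem_support_iff.1 hm

lemma nonzero_poly_exists_point {W : MvPolynomial (Fin 2) ℝ} (hW : W ≠ 0) :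
    ∃ a : ℝ × ℝ, MvPolynomial.eval ![a.1, a.2] W ≠ 0 := by
  by_contra hc
  push_neg at hc
  apply hW
  apply MvPolynomial.funext (q := 0)
  intro x
  have hx : ![(x 0, x 1).1, (x 0, x 1).2] = x := by
    funext i
    match i with
    | 0 => rfl
    | 1 => rfl
  rw [map_zero, ← hx]
  exact hc (x 0, x 1)

lemma eval_smul' (t : ℝ) (p : MvPolynomial (Fin 2) ℝ) (x : Fin 2 → ℝ) :
    MvPolynomial.eval x (t • p) = t * MvPolynomial.eval x p := by
  rw [smul_eq_C_mul, map_mul, eval_C]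

end S13

namespace S13
open Module MvPolynomial

lemma forward (d : ℕ) (hd : 1 ≤ d) (A : Finset (ℝ × ℝ)) (p : MvPolynomial (Fin 2) ℝ)
    (h1 : 1 ≤ p.totalDegree) (h2 : p.totalDegree ≤ d)
    (h3 : IsCurve d (zeroSet p))
    (h4 : ∀ C₂ : Set (ℝ × ℝ), IsCurve d C₂ → zeroSet p ∩ ↑A ⊆ C₂ → zeroSet p = C₂) :
    tau d p = ↑(affineSpan ℝ (vero d '' (zeroSet p ∩ ↑A))) ∧
      fdim (affineSpan ℝ (vero d '' (zeroSet p ∩ ↑A))) = Fintype.card (VIdx d) - 1 := by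
  classical
  set R : Set (ℝ × ℝ) := zeroSet p ∩ ↑A with hR
  set S : Set (VIdx d → ℝ) := vero d '' R with hS
  set N := Fintype.card (VIdx d) with hN
  have hN2 : 2 ≤ N := card_ge d hd
  obtain ⟨q₀, hq₀⟩ := exists_coeffOf_ne_zero d h1 h2
  have hq₀' : Phi d p (some q₀) ≠ 0 := hq₀
  -- S lies in the solution set
  have hsub : S ⊆ {z | evE d (Phi d p) z = 0} := by
    rintro _ ⟨a, ⟨haz, _⟩, rfl⟩
    exact (mem_zeroSet_iff d p h2 a).1 haz
  -- the degree-exactly-d witness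
  obtain ⟨g, hgdeg, hgzero⟩ := h3
  have hgle : g.totalDegree ≤ d := le_of_eq hgdeg
  have hg0 : g ≠ 0 := by
    intro h0; rw [h0, totalDegree_zero] at hgdeg; omega
  obtain ⟨qd, hqdsum, hqdne⟩ := exists_top_index d hd hgdeg
  -- main claim : the vector span has dimension N - 1
  have hdim : finrank ℝ (vectorSpan ℝ S) = N - 1 := by
    have hub : finrank ℝ (vectorSpan ℝ S) ≤ N - 1 := by
      have hle : affineSpan ℝ S ≤ T d (Phi d p) := affineSpan_le.2 hsub
      have hdle := AffineSubspace.direction_le hle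
      rw [direction_affineSpan] at hdle
      have := Submodule.finrank_mono hdle
      rwa [direction_T d _ (T_nonempty d _ hq₀'), finrank_ker_linPart d _ hq₀'] at this
    by_contra hne
    have hlt : finrank ℝ (vectorSpan ℝ S) < N - 1 := lt_of_le_of_ne hub hne
    -- hence the span of iota '' S is small, and the annihilator has dim ≥ 2
    have hsp : finrank ℝ (Submodule.span ℝ (iota d '' S)) ≤ N - 1 := by
      rcases S.eq_empty_or_nonempty with hSe | hSne
      · rw [hSe, Set.image_empty, Submodule.span_empty]
        rw [finrank_bot]
        omega
      · rw [finrank_span_iota d S hSne]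
        omega
    have horth := Submodule.finrank_add_finrank_orthogonal (Submodule.span ℝ (iota d '' S))
    rw [finrank_euclideanSpace, Fintype.card_option, ← hN] at horth
    have hK2 : 2 ≤ finrank ℝ ((Submodule.span ℝ (iota d '' S))ᗮ) := by omega
    set K := (Submodule.span ℝ (iota d '' S))ᗮ with hKdef
    -- Phi g lies in K
    have hgvan : ∀ a ∈ R, MvPolynomial.eval ![a.1, a.2] g = 0 := by
      intro a ha
      have : a ∈ zeroSet g := by
        rw [← hgzero]; exact ha.1
      exact this
    have hgK : Phi d g ∈ K := by
      rw [hKdef, mem_orth_iff]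
      rintro _ ⟨a, ha, rfl⟩
      exact (mem_zeroSet_iff d g hgle a).1 (by rw [← hgzero]; exact ha.1)
    have hPhig : Phi d g ≠ 0 := Phi_ne_zero d hgle hg0
    -- pick v₁ in K not in the line through Phi g
    have hv1 : ∃ v₁ ∈ K, v₁ ∉ (ℝ ∙ Phi d g) := by
      by_contra hc
      push_neg at hc
      have hKle : K ≤ (ℝ ∙ Phi d g) := hc
      have := Submodule.finrank_mono hKle
      rw [finrank_span_singleton hPhig] at this
      omega
    obtain ⟨v₁, hv₁K, hv₁ns⟩ := hv1
    set p₁ := Psi d v₁ with hp₁def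
    have hp₁Phi : Phi d p₁ = v₁ := Phi_Psi d v₁
    have hp₁le : p₁.totalDegree ≤ d := totalDegree_Psi_le d v₁
    have hp₁0 : p₁ ≠ 0 := by
      intro h0
      apply hv₁ns
      rw [← hp₁Phi, h0, Phi_zero]
      exact Submodule.zero_mem _
    have hp₁van : ∀ a ∈ R, MvPolynomial.eval ![a.1, a.2] p₁ = 0 := by
      intro a ha
      rw [eval_eq_evE d p₁ hp₁le, hp₁Phi]
      exact (mem_orth_iff d S v₁).1 hv₁K (vero d a) ⟨a, ha, rfl⟩
    -- top coefficients
    set cg := coeffOf d g qd with hcg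
    set c1 := coeffOf d p₁ qd with hc1
    -- the generic-point polynomial
    have hW3 : cg • p₁ - c1 • g ≠ 0 := by
      intro h0
      apply hv₁ns
      have : cg • p₁ = c1 • g := by
        have := sub_eq_zero.1 h0
        exact this
      have hv : cg • v₁ = c1 • Phi d g := by
        rw [← hp₁Phi, ← Phi_smul, this, Phi_smul]
      have hv' : v₁ = (cg⁻¹ * c1) • Phi d g := by
        rw [mul_smul]
        rw [← hv, ← mul_smul, inv_mul_cancel₀ hqdne, one_smul]
      rw [hv']
      exact Submodule.smul_mem _ _ (Submodule.mem_span_singleton_self _)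
    have hW : g * p₁ * (cg • p₁ - c1 • g) ≠ 0 :=
      mul_ne_zero (mul_ne_zero hg0 hp₁0) hW3
    obtain ⟨a, ha⟩ := nonzero_poly_exists_point hW
    rw [map_mul, map_mul] at ha
    have hga : MvPolynomial.eval ![a.1, a.2] g ≠ 0 := fun h => ha (by rw [h]; ring)
    have hp₁a : MvPolynomial.eval ![a.1, a.2] p₁ ≠ 0 := fun h => ha (by rw [h]; ring)
    have h3rd : cg * MvPolynomial.eval ![a.1, a.2] p₁
        - c1 * MvPolynomial.eval ![a.1, a.2] g ≠ 0 := by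
      intro h
      apply ha
      rw [map_sub, eval_smul', eval_smul', h]
      ring
    set evg := MvPolynomial.eval ![a.1, a.2] g with hevg
    set evp := MvPolynomial.eval ![a.1, a.2] p₁ with hevp
    set t := -evg / evp with ht
    set h' := g + t • p₁ with hh'
    have hh'le : h'.totalDegree ≤ d := by
      refine le_trans (totalDegree_add _ _) (max_le hgle ?_)
      exact le_trans (totalDegree_smul_le _ _) hp₁le
    have hcoefftop : coeffOf d h' qd ≠ 0 := by
      have hco : coeffOf d h' qd = cg + t * c1 := by
        rw [hh']
        show coeff (mIdx d qd) (g + t • p₁) = _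
        rw [coeff_add, coeff_smul]
        rfl
      rw [hco]
      intro h0
      apply h3rd
      have hts : t * c1 = -cg := by linarith
      rw [ht] at hts
      field_simp at hts
      -- hts : evg * c1 = cg * evp  (up to sign/shape)
      linarith [hts]
    have hh'deg : h'.totalDegree = d := by
      apply le_antisymm hh'le
      have := one_le_totalDegree d hcoefftop
      omega
    have hh'van : zeroSet p ∩ ↑A ⊆ zeroSet h' := by
      intro a' ha'
      show MvPolynomial.eval ![a'.1, a'.2] h' = 0
      rw [hh', map_add, eval_smul', hgvan a' ha', hp₁van a' ha']
      ring
    have hzeq := h4 (zeroSet h') ⟨h', hh'deg, rfl⟩ hh'van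
    -- the point a is in zeroSet h' but not in zeroSet p
    have hain : a ∈ zeroSet h' := by
      show MvPolynomial.eval ![a.1, a.2] h' = 0
      rw [hh', map_add, eval_smul', ← hevg, ← hevp, ht]
      field_simp
      ring
    have : a ∈ zeroSet p := by rw [hzeq]; exact hain
    rw [hgzero] at this
    exact hga this
  -- conclude
  have hSne : S.Nonempty := by
    rcases S.eq_empty_or_nonempty with hSe | hSne
    · exfalso
      rw [hSe] at hdim
      have : vectorSpan ℝ (∅ : Set (VIdx d → ℝ)) = ⊥ := vectorSpan_empty ℝ (VIdx d → ℝ)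
      rw [this, finrank_bot] at hdim
      omega
    · exact hSne
  constructor
  · rw [tau_eq]
    exact (coe_affineSpan_eq d (Phi d p) hq₀' S hSne hsub hdim).symm
  · rw [fdim, direction_affineSpan]
    exact hdim

end S13

namespace S13
open Module MvPolynomial

lemma backward (d : ℕ) (hd : 1 ≤ d) (A : Finset (ℝ × ℝ)) (R : Set (ℝ × ℝ)) (hRA : R ⊆ ↑A)
    (hdim : fdim (affineSpan ℝ (vero d '' R)) = (d + 2).choose 2 - 2) :
    ∃ p : MvPolynomial (Fin 2) ℝ,
      1 ≤ p.totalDegree ∧ p.totalDegree ≤ d ∧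
      IsCurve d (zeroSet p) ∧
      (∀ C₂ : Set (ℝ × ℝ), IsCurve d C₂ → zeroSet p ∩ ↑A ⊆ C₂ → zeroSet p = C₂) ∧
      (↑(affineSpan ℝ (vero d '' R)) : Set (VIdx d → ℝ)) = tau d p := by
  classical
  set S : Set (VIdx d → ℝ) := vero d '' R with hS
  set N := Fintype.card (VIdx d) with hN
  have hN2 : 2 ≤ N := card_ge d hd
  have hchoose : (d + 2).choose 2 - 2 = N - 1 := by
    have h3 : 3 ≤ (d + 2).choose 2 := by
      have := Nat.choose_le_choose 2 (show 3 ≤ d + 2 by omega)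
      simpa using this
    rw [hN, card_VIdx d]
    omega
  have hdim' : finrank ℝ (vectorSpan ℝ S) = N - 1 := by
    rw [fdim, direction_affineSpan] at hdim
    rw [hdim, hchoose]
  have hSne : S.Nonempty := by
    rcases S.eq_empty_or_nonempty with hSe | h
    · exfalso
      rw [hSe, vectorSpan_empty ℝ (VIdx d → ℝ), finrank_bot] at hdim'
      omega
    · exact h
  -- the annihilator K is one-dimensional
  set K := (Submodule.span ℝ (iota d '' S))ᗮ with hKdef
  have hKrank : finrank ℝ K = 1 := by
    have horth := Submodule.finrank_add_finrank_orthogonal (Submodule.span ℝ (iota d '' S))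
    rw [finrank_euclideanSpace, Fintype.card_option, ← hN] at horth
    rw [finrank_span_iota d S hSne, hdim'] at horth
    rw [hKdef]
    omega
  have hKne : K ≠ ⊥ := by
    intro h0
    rw [h0, finrank_bot] at hKrank
    omega
  obtain ⟨v, hvK, hv0⟩ := (Submodule.ne_bot_iff K).1 hKne
  have hKspan : K = ℝ ∙ v := by
    symm
    apply Submodule.eq_of_le_of_finrank_eq
    · rw [Submodule.span_singleton_le_iff_mem]; exact hvK
    · rw [finrank_span_singleton hv0, hKrank]
  -- v has a nonzero Veronese component
  have hvsome : ∃ q₀ : VIdx d, v (some q₀) ≠ 0 := by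
    by_contra hc
    push_neg at hc
    obtain ⟨z₀, hz₀⟩ := hSne
    have hz : evE d v z₀ = 0 := (mem_orth_iff d S v).1 hvK z₀ hz₀
    rw [evE] at hz
    rw [Finset.sum_eq_zero (fun q _ => by rw [hc q, zero_mul]), add_zero] at hz
    apply hv0
    ext o
    cases o with
    | none => exact hz
    | some q => exact hc q
  obtain ⟨q₀, hq₀⟩ := hvsome
  set p := Psi d v with hpdef
  have hPhip : Phi d p = v := Phi_Psi d v
  have hple : p.totalDegree ≤ d := totalDegree_Psi_le d v
  have hp1 : 1 ≤ p.totalDegree := by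
    have hcoeff : coeffOf d p q₀ ≠ 0 := by
      rw [hpdef]; rw [coeffOf_Psi]; exact hq₀
    have := one_le_totalDegree d hcoeff
    have := q₀.2.1
    omega
  have hp0 : p ≠ 0 := by
    intro h0; rw [h0, totalDegree_zero] at hp1; omega
  -- p vanishes on R
  have hpvan : ∀ a ∈ R, MvPolynomial.eval ![a.1, a.2] p = 0 := by
    intro a ha
    rw [eval_eq_evE d p hple, hPhip]
    exact (mem_orth_iff d S v).1 hvK (vero d a) ⟨a, ha, rfl⟩
  -- any degree ≤ d polynomial vanishing on R is a multiple of p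
  have hmult : ∀ h : MvPolynomial (Fin 2) ℝ, h.totalDegree ≤ d →
      (∀ a ∈ R, MvPolynomial.eval ![a.1, a.2] h = 0) → ∃ t : ℝ, h = t • p := by
    intro h hhle hhvan
    have hhK : Phi d h ∈ K := by
      rw [hKdef, mem_orth_iff]
      rintro _ ⟨a, ha, rfl⟩
      exact (mem_zeroSet_iff d h hhle a).1 (hhvan a ha)
    rw [hKspan, Submodule.mem_span_singleton] at hhK
    obtain ⟨t, ht⟩ := hhK
    refine ⟨t, ?_⟩
    apply Phi_injOn d hhle (le_trans (totalDegree_smul_le t p) hple)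
    rw [Phi_smul, hPhip, ← ht]
  -- total degree is exactly d
  have hpdeg : p.totalDegree = d := by
    by_contra hne
    have hlt : p.totalDegree < d := lt_of_le_of_ne hple hne
    set p' := X 0 * p with hp'def
    have hp'le : p'.totalDegree ≤ d := by
      refine le_trans (totalDegree_mul _ _) ?_
      rw [totalDegree_X]
      omega
    have hp'van : ∀ a ∈ R, MvPolynomial.eval ![a.1, a.2] p' = 0 := by
      intro a ha
      rw [hp'def, map_mul, hpvan a ha, mul_zero]
    obtain ⟨t, ht⟩ := hmult p' hp'le hp'van
    have hfac : (X 0 - C t) * p = 0 := by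
      rw [sub_mul, ← hp'def, ht, smul_eq_C_mul, sub_eq_zero]
    rcases mul_eq_zero.1 hfac with hx | hp
    · have hcoeff := congrArg (coeff (Finsupp.single 0 1)) hx
      rw [coeff_sub, coeff_X, coeff_C] at hcoeff
      rw [if_neg (show (0 : Fin 2 →₀ ℕ) ≠ Finsupp.single 0 1 from fun h0 =>
        one_ne_zero (Finsupp.single_eq_zero.1 h0.symm))] at hcoeff
      simp at hcoeff
    · exact hp0 hp
  refine ⟨p, hp1, hple, ⟨p, hpdeg, rfl⟩, ?_, ?_⟩
  · -- determinedness
    intro C₂ hC₂ hsub₂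
    obtain ⟨h, hhdeg, rfl⟩ := hC₂
    have hhvan : ∀ a ∈ R, MvPolynomial.eval ![a.1, a.2] h = 0 := by
      intro a ha
      exact hsub₂ ⟨(by exact hpvan a ha), hRA ha⟩
    obtain ⟨t, ht⟩ := hmult h hhdeg.le hhvan
    have ht0 : t ≠ 0 := by
      intro h0
      rw [h0, zero_smul] at ht
      rw [ht, totalDegree_zero] at hhdeg
      omega
    ext a
    show MvPolynomial.eval ![a.1, a.2] p = 0 ↔ MvPolynomial.eval ![a.1, a.2] h = 0
    rw [ht, eval_smul']
    constructor
    · intro hz; rw [hz, mul_zero]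
    · intro hz
      rcases mul_eq_zero.1 hz with h' | h'
      · exact absurd h' ht0
      · exact h'
  · -- the hyperplane identification
    have hsub : S ⊆ {z | evE d v z = 0} := fun z hz => (mem_orth_iff d S v).1 hvK z hz
    have := coe_affineSpan_eq d v hq₀ S hSne hsub hdim'
    rw [this, tau_eq, hPhip]

end S13


theorem stmt_13 (d : ℕ) (hd : 1 ≤ d) (A : Finset (ℝ × ℝ))
    (hA : ∀ C : Set (ℝ × ℝ), IsCurveLe d C → ¬(↑A ⊆ C)) :
    {H : Set (VIdx d → ℝ) | ∃ p : MvPolynomial (Fin 2) ℝ,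
        1 ≤ p.totalDegree ∧ p.totalDegree ≤ d ∧
        IsCurve d (zeroSet p) ∧
        (∀ C₂ : Set (ℝ × ℝ), IsCurve d C₂ → zeroSet p ∩ ↑A ⊆ C₂ → zeroSet p = C₂) ∧
        H = tau d p}
      = {H : Set (VIdx d → ℝ) | ∃ R : Set (ℝ × ℝ), R ⊆ ↑A ∧
          H = ↑(affineSpan ℝ (vero d '' R)) ∧
          fdim (affineSpan ℝ (vero d '' R)) = Nat.choose (d + 2) 2 - 2} := by

  have hch3 : 3 ≤ (d + 2).choose 2 := by
    have := Nat.choose_le_choose 2 (show 3 ≤ d + 2 by omega)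
    simpa using this
  ext H
  simp only [Set.mem_setOf_eq]
  constructor
  · rintro ⟨p, h1, h2, h3, h4, rfl⟩
    obtain ⟨htau, hdim⟩ := S13.forward d hd A p h1 h2 h3 h4
    refine ⟨zeroSet p ∩ ↑A, Set.inter_subset_right, htau, ?_⟩
    rw [hdim, S13.card_VIdx d]
    omega
  · rintro ⟨R, hRA, rfl, hdim⟩
    obtain ⟨p, hp1, hp2, hp3, hp4, hp5⟩ := S13.backward d hd A R hRA hdim
    exact ⟨p, hp1, hp2, hp3, hp4, hp5⟩
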